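/- For every irrational α, the best constant of Diophantine approximation satisfies ℓ(α) = limsup_{n→∞} (αₙ + βₙ), where αₙ are the complete quotients of α and βₙ = qₙ₋₂/qₙ₋₁ (limits taken in [0, ∞]). -/

import Mathlib

/-- The complete quotients of `α`: `α₀ = α` and `αₙ₊₁ = 1/(αₙ - ⌊αₙ⌋)`. -/
noncomputable def cq (α : ℝ) : ℕ → ℝ
  | 0 => α
  | n + 1 => 1 / (cq α n - ⌊cq α n⌋)

/-- The partial quotients of the continued fraction expansion of `α`. -/
noncomputable def cfA (α : ℝ) (n : ℕ) : ℤ := ⌊cq α n⌋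

/-- The numerators `pₙ` of the convergents of `α`:
`p₀ = a₀`, `p₁ = a₁a₀ + 1`, `pₙ₊₂ = aₙ₊₂pₙ₊₁ + pₙ` (equivalently `p₋₁ = 1`, `p₋₂ = 0`). -/
noncomputable def cfP (α : ℝ) : ℕ → ℤ
  | 0 => cfA α 0
  | 1 => cfA α 1 * cfA α 0 + 1
  | n + 2 => cfA α (n + 2) * cfP α (n + 1) + cfP α n

/-- The denominators `qₙ` of the convergents of `α`:
`q₀ = 1`, `q₁ = a₁`, `qₙ₊₂ = aₙ₊₂qₙ₊₁ + qₙ` (equivalently `q₋₁ = 0`, `q₋₂ = 1`). -/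
noncomputable def cfQ (α : ℝ) : ℕ → ℤ
  | 0 => 1
  | 1 => cfA α 1
  | n + 2 => cfA α (n + 2) * cfQ α (n + 1) + cfQ α n

/-- The best constant of Diophantine approximation of `α`:
`ℓ(α) = limsup_{n→∞} 1/|qₙ(qₙα - pₙ)|`, valued in `[0, ∞]`. -/
noncomputable def ell (α : ℝ) : ENNReal :=
  Filter.atTop.limsup fun n : ℕ =>
    ENNReal.ofReal (1 / |(cfQ α n : ℝ) * ((cfQ α n : ℝ) * α - (cfP α n : ℝ))|)

/-- The Lagrange spectrum: the set of finite values `ℓ(α)` over irrational `α`. -/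
noncomputable def LagrangeSpectrum : Set ℝ :=
  {x | ∃ α : ℝ, Irrational α ∧ ell α ≠ ⊤ ∧ x = (ell α).toReal}

/-- The Markov spectrum: the set of values `√(b² - 4ac) / inf |ax² + bxy + cy²|`, the infimum
being over `(x,y) ∈ ℤ² - {(0,0)}`, for indefinite binary quadratic forms with positive
discriminant (and positive infimum, so that the value is finite). -/
noncomputable def MarkovSpectrum : Set ℝ :=
  {x | ∃ a b c : ℝ, 0 < b ^ 2 - 4 * a * c ∧
    0 < sInf {v : ℝ | ∃ p q : ℤ, ¬(p = 0 ∧ q = 0) ∧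
        v = |a * (p : ℝ) ^ 2 + b * (p : ℝ) * (q : ℝ) + c * (q : ℝ) ^ 2|} ∧
    x = Real.sqrt (b ^ 2 - 4 * a * c) /
      sInf {v : ℝ | ∃ p q : ℤ, ¬(p = 0 ∧ q = 0) ∧
        v = |a * (p : ℝ) ^ 2 + b * (p : ℝ) * (q : ℝ) + c * (q : ℝ) ^ 2|}}

noncomputable def pE (α : ℝ) : ℕ → ℤ
  | 0 => 0
  | 1 => 1
  | n + 2 => cfP α n

noncomputable def qE (α : ℝ) : ℕ → ℤ
  | 0 => 1
  | 1 => 0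
  | n + 2 => cfQ α n

lemma pE_rec (α : ℝ) (n : ℕ) : pE α (n + 2) = cfA α n * pE α (n + 1) + pE α n := by
  match n with
  | 0 => simp [pE, cfP]
  | 1 => simp [pE, cfP]
  | n + 2 => simp [pE, cfP]

lemma qE_rec (α : ℝ) (n : ℕ) : qE α (n + 2) = cfA α n * qE α (n + 1) + qE α n := by
  match n with
  | 0 => simp [qE, cfQ]
  | 1 => simp [qE, cfQ]
  | n + 2 => simp [qE, cfQ]

lemma cq_irrational (α : ℝ) (hα : Irrational α) : ∀ n, Irrational (cq α n)
  | 0 => hα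
  | (n+1) => by
    show Irrational (1 / (cq α n - ⌊cq α n⌋))
    rw [one_div]
    exact ((cq_irrational α hα n).sub_intCast _).inv

lemma cq_one_lt (α : ℝ) (hα : Irrational α) (n : ℕ) : 1 < cq α (n + 1) := by
  have hirr := cq_irrational α hα n
  have h0 : 0 < cq α n - ⌊cq α n⌋ := by
    have := Int.fract_pos.mpr (by
      intro h
      exact (hirr.ne_int ⌊cq α n⌋) h)
    rwa [Int.fract] at this
  have h1 : cq α n - ⌊cq α n⌋ < 1 := by
    have := Int.fract_lt_one (cq α n)
    rwa [Int.fract] at this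
  show 1 < 1 / (cq α n - ⌊cq α n⌋)
  rw [lt_div_iff₀ h0]; linarith

lemma cq_eq (α : ℝ) (hα : Irrational α) (n : ℕ) :
    cq α n = cfA α n + 1 / cq α (n + 1) := by
  have h1 := cq_one_lt α hα n
  have hne : cq α (n + 1) ≠ 0 := by linarith
  have hdef : cq α (n + 1) = 1 / (cq α n - ⌊cq α n⌋) := rfl
  have hf : cq α n - ⌊cq α n⌋ ≠ 0 := by
    intro h; rw [hdef, h, div_zero] at h1; linarith
  rw [cfA, hdef, one_div_one_div]; ring

lemma key (α : ℝ) (hα : Irrational α) : ∀ n : ℕ,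
    (pE α (n + 1) : ℝ) * cq α n + pE α n =
      α * ((qE α (n + 1) : ℝ) * cq α n + qE α n) := by
  intro n
  induction n with
  | zero => simp [pE, qE, cq]
  | succ n ih =>
    have h1 := cq_one_lt α hα n
    have hne : cq α (n + 1) ≠ 0 := by linarith
    have hc : cq α n * cq α (n + 1) = cfA α n * cq α (n + 1) + 1 := by
      rw [cq_eq α hα n]; field_simp
    have hp := pE_rec α n
    have hq := qE_rec α n
    have hp' : (pE α (n + 2) : ℝ) = cfA α n * pE α (n + 1) + pE α n := by
      exact_mod_cast congrArg (Int.cast : ℤ → ℝ) hp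
    have hq' : (qE α (n + 2) : ℝ) = cfA α n * qE α (n + 1) + qE α n := by
      exact_mod_cast congrArg (Int.cast : ℤ → ℝ) hq
    rw [hp', hq']
    linear_combination (cq α (n + 1)) * ih +
      (α * (qE α (n + 1) : ℝ) - (pE α (n + 1) : ℝ)) * hc

lemma det (α : ℝ) : ∀ n : ℕ,
    pE α (n + 1) * qE α n - pE α n * qE α (n + 1) = (-1) ^ n := by
  intro n
  induction n with
  | zero => simp [pE, qE]
  | succ n ih =>
    rw [pE_rec, qE_rec, pow_succ]
    linear_combination (-1 : ℤ) * ih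

lemma cfA_pos (α : ℝ) (hα : Irrational α) (n : ℕ) : 1 ≤ cfA α (n + 1) := by
  rw [cfA]
  exact Int.le_floor.mpr (by exact_mod_cast (cq_one_lt α hα n).le)

lemma cfQ_pos (α : ℝ) (hα : Irrational α) : ∀ n, 1 ≤ cfQ α n ∧ 1 ≤ cfQ α (n + 1) := by
  intro n
  induction n with
  | zero => exact ⟨le_refl 1, cfA_pos α hα 0⟩
  | succ n ih =>
    refine ⟨ih.2, ?_⟩
    show 1 ≤ cfA α (n + 2) * cfQ α (n + 1) + cfQ α n
    nlinarith [cfA_pos α hα (n + 1), ih.1, ih.2]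

lemma qE_nonneg (α : ℝ) (hα : Irrational α) : ∀ n, 0 ≤ qE α n
  | 0 => zero_le_one
  | 1 => le_refl 0
  | (n+2) => by show (0:ℤ) ≤ cfQ α n; linarith [(cfQ_pos α hα n).1]

lemma main_id (α : ℝ) (hα : Irrational α) (n : ℕ) :
    1 / |(cfQ α n : ℝ) * ((cfQ α n : ℝ) * α - (cfP α n : ℝ))| =
      cq α (n + 1) + (qE α (n + 1) : ℝ) / (cfQ α n : ℝ) := by
  have hk := key α hα (n + 1)
  have hdet : (pE α (n+2) : ℝ) * qE α (n+1) - pE α (n+1) * qE α (n+2) = (-1)^(n+1) := by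
    exact_mod_cast congrArg (Int.cast : ℤ → ℝ) (det α (n+1))
  have hQ2 : (1:ℝ) ≤ (cfQ α n : ℝ) := by exact_mod_cast (cfQ_pos α hα n).1
  have hQ1 : (0:ℝ) ≤ (qE α (n+1) : ℝ) := by exact_mod_cast qE_nonneg α hα (n+1)
  have hc := cq_one_lt α hα n
  have hq2 : (qE α (n+2) : ℝ) = (cfQ α n : ℝ) := rfl
  have hp2 : (pE α (n+2) : ℝ) = (cfP α n : ℝ) := rfl
  have hQ2pos : (0:ℝ) < (cfQ α n : ℝ) := by linarith
  have hD : 0 < (cfQ α n : ℝ) * cq α (n+1) + (qE α (n+1) : ℝ) := by nlinarith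
  have hE : (cfQ α n : ℝ) * ((cfQ α n : ℝ) * α - (cfP α n : ℝ)) =
      (-1)^n * (cfQ α n : ℝ) / ((cfQ α n : ℝ) * cq α (n+1) + (qE α (n+1) : ℝ)) := by
    rw [eq_div_iff hD.ne']
    rw [hq2, hp2] at hk hdet
    linear_combination (-(cfQ α n : ℝ) * (cfQ α n : ℝ)) * hk + (-(cfQ α n : ℝ)) * hdet
  rw [hE, abs_div, abs_mul, abs_pow, abs_neg, abs_one, one_pow, one_mul,
      abs_of_pos hQ2pos, abs_of_pos hD, one_div_div]
  field_simp


/-- **Perron's characterization of `ℓ(α)`.** For every irrational `α`,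
`ℓ(α) = limsup_{n→∞} (αₙ + βₙ)` where `αₙ` are the complete quotients of `α` and
`βₙ = qₙ₋₂/qₙ₋₁` (i.e. `βₙ₊₁ = qₙ₋₁/qₙ`, with `q₋₁ = 0`); limits taken in `[0,∞]`. -/
theorem ell_eq_limsup_cq_add_beta (α : ℝ) (hα : Irrational α) :
    ell α = Filter.atTop.limsup (fun n : ℕ =>
      ENNReal.ofReal (cq α (n + 1) +
        (if n = 0 then (0 : ℝ) else (cfQ α (n - 1) : ℝ)) / (cfQ α n : ℝ))) := by
  rw [ell]
  congr 1
  funext n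
  congr 1
  match n with
  | 0 =>
    rw [main_id α hα 0]
    norm_num [qE]
  | (m+1) =>
    rw [main_id α hα (m+1)]
    simp only [Nat.add_sub_cancel, if_neg (Nat.succ_ne_zero m)]
    rfl
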